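/- Let p, q be coprime positive integers and define γ_n = (1/q)·Σ_{m=0}^{q−1} exp(−2πi·m²·p/q)·cos(2πnm/q) for n ∈ ℤ (so γ is q-periodic). Then the q×q complex circulant matrix Γ with entries Γ_{m,n} = γ_{n−m} (indices taken in ZMod q) is unitary, i.e. Γ·Γ* = 1. -/

import Mathlib

open Complex Finset

namespace CFU

/-- `e q a = exp(2πi a/q)`. -/
noncomputable def e (q : ℕ) (a : ℤ) : ℂ :=
  Complex.exp (2 * (Real.pi : ℂ) * Complex.I * (a : ℂ) / (q : ℂ))

lemma e_add (q : ℕ) (a b : ℤ) : e q (a + b) = e q a * e q b := by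
  rw [e, e, e, ← Complex.exp_add]
  congr 1
  push_cast
  ring

lemma e_pow (q : ℕ) (a : ℤ) (k : ℕ) : e q a ^ k = e q (a * k) := by
  rw [e, e, ← Complex.exp_nat_mul]
  congr 1
  push_cast
  ring

lemma e_q_mul {q : ℕ} (hq : 0 < q) (t : ℤ) : e q ((q : ℤ) * t) = 1 := by
  have hq' : (q : ℂ) ≠ 0 := Nat.cast_ne_zero.mpr hq.ne'
  rw [e, show (2 * (Real.pi : ℂ) * Complex.I * (((q : ℤ) * t : ℤ) : ℂ) / (q : ℂ))
      = (t : ℂ) * (2 * (Real.pi : ℂ) * Complex.I) by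
    field_simp
    push_cast
    ring]
  exact Complex.exp_int_mul_two_pi_mul_I t

lemma e_eq_one_iff {q : ℕ} (hq : 0 < q) (a : ℤ) : e q a = 1 ↔ (q : ℤ) ∣ a := by
  constructor
  · intro h
    rw [e, Complex.exp_eq_one_iff] at h
    obtain ⟨n, hn⟩ := h
    have hq' : (q : ℂ) ≠ 0 := Nat.cast_ne_zero.mpr hq.ne'
    have hπ : (2 * (Real.pi : ℂ) * Complex.I) ≠ 0 := by
      simp [Real.pi_ne_zero, Complex.I_ne_zero, Complex.ofReal_ne_zero]
    have h2 : (2 * (Real.pi : ℂ) * Complex.I) * (a : ℂ)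
        = (2 * (Real.pi : ℂ) * Complex.I) * ((n : ℂ) * (q : ℂ)) := by
      field_simp at hn
      linear_combination (2 * (Real.pi : ℂ) * Complex.I) * hn
    have h3 : (a : ℂ) = ((n * q : ℤ) : ℂ) := by
      push_cast
      exact mul_left_cancel₀ hπ h2
    have h4 : a = n * q := by exact_mod_cast h3
    exact ⟨n, by rw [h4, mul_comm]⟩
  · rintro ⟨t, rfl⟩
    exact e_q_mul hq t

lemma e_geom {q : ℕ} (hq : 0 < q) (a : ℤ) :
    ∑ k ∈ range q, e q (a * k) = if (q : ℤ) ∣ a then (q : ℂ) else 0 := by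
  have hrw : ∀ k ∈ range q, e q (a * k) = e q a ^ k := fun k _ => (e_pow q a k).symm
  rw [Finset.sum_congr rfl hrw]
  by_cases h : (q : ℤ) ∣ a
  · rw [if_pos h]
    have h1 : e q a = 1 := (e_eq_one_iff hq a).2 h
    simp [h1]
  · rw [if_neg h]
    have h1 : e q a ≠ 1 := fun hh => h ((e_eq_one_iff hq a).1 hh)
    rw [geom_sum_eq h1]
    have h2 : e q a ^ q = 1 := by
      rw [e_pow, mul_comm]
      exact e_q_mul hq a
    simp [h2]

lemma e_conj (q : ℕ) (a : ℤ) : (starRingEnd ℂ) (e q a) = e q (-a) := by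
  rw [e, e, ← Complex.exp_conj]
  congr 1
  simp [map_div₀, Complex.conj_I, map_ofNat]

/-- `c p q m = exp(-2πi m² p/q)`. -/
noncomputable def c (p q : ℕ) (m : ℤ) : ℂ :=
  Complex.exp (-2 * (Real.pi : ℂ) * Complex.I * (m : ℂ)^2 * (p : ℂ) / (q : ℂ))

lemma c_add_q {q : ℕ} (hq : 0 < q) (p : ℕ) (m : ℤ) : c p q (m + q) = c p q m := by
  have hq' : (q : ℂ) ≠ 0 := Nat.cast_ne_zero.mpr hq.ne'
  rw [c, c, show (-2 * (Real.pi : ℂ) * Complex.I * (((m + q : ℤ)) : ℂ)^2 * (p : ℂ) / (q : ℂ))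
      = (-2 * (Real.pi : ℂ) * Complex.I * (m : ℂ)^2 * (p : ℂ) / (q : ℂ))
        + ((-(2*m + q)*p : ℤ) : ℂ) * (2 * (Real.pi : ℂ) * Complex.I) by
    field_simp
    push_cast
    ring, Complex.exp_add, Complex.exp_int_mul_two_pi_mul_I, mul_one]

lemma c_neg (p q : ℕ) (m : ℤ) : c p q (-m) = c p q m := by
  rw [c, c]
  congr 2
  push_cast
  ring

lemma c_mul_conj (p q : ℕ) (m : ℤ) : c p q m * (starRingEnd ℂ) (c p q m) = 1 := by
  have h : (starRingEnd ℂ) (-2 * (Real.pi : ℂ) * Complex.I * (m : ℂ)^2 * (p : ℂ) / (q : ℂ))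
      = -(-2 * (Real.pi : ℂ) * Complex.I * (m : ℂ)^2 * (p : ℂ) / (q : ℂ)) := by
    simp [map_div₀, Complex.conj_I, map_ofNat]
    ring
  rw [c, ← Complex.exp_conj, h, ← Complex.exp_add, add_neg_cancel, Complex.exp_zero]

lemma sum_sym {q : ℕ} (hq : 0 < q) (p : ℕ) (n : ℤ) :
    ∑ m ∈ range q, c p q m * e q (-(n * m)) = ∑ m ∈ range q, c p q m * e q (n * m) := by
  have key : ∀ m ∈ range q,
      c p q ((q - 1 - m : ℕ) : ℤ) * e q (-(n * ((q - 1 - m : ℕ) : ℤ)))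
      = c p q ((m : ℤ) + 1) * e q (n * ((m : ℤ) + 1)) := by
    intro m hm
    have hm' : m < q := mem_range.mp hm
    have hcast : ((q - 1 - m : ℕ) : ℤ) = (q : ℤ) - 1 - m := by omega
    rw [hcast]
    have h1 : c p q ((q : ℤ) - 1 - m) = c p q ((m : ℤ) + 1) := by
      rw [show (q : ℤ) - 1 - m = -((m : ℤ) + 1) + q by ring, c_add_q hq, c_neg]
    have h2 : e q (-(n * ((q : ℤ) - 1 - m))) = e q (n * ((m : ℤ) + 1)) := by
      rw [show -(n * ((q : ℤ) - 1 - m)) = n * ((m : ℤ) + 1) + (q : ℤ) * (-n) by ring,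
        e_add, e_q_mul hq, mul_one]
    rw [h1, h2]
  have step1 : ∑ m ∈ range q, c p q m * e q (-(n * m))
      = ∑ m ∈ range q, c p q ((m : ℤ) + 1) * e q (n * ((m : ℤ) + 1)) := by
    rw [← Finset.sum_range_reflect (fun m : ℕ => c p q m * e q (-(n * m))) q]
    exact Finset.sum_congr rfl key
  rw [step1]
  have hF : ∀ m : ℕ, c p q ((m : ℤ) + 1) * e q (n * ((m : ℤ) + 1))
      = c p q ((m + 1 : ℕ) : ℤ) * e q (n * ((m + 1 : ℕ) : ℤ)) := by
    intro m; push_cast; ring_nf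
  rw [Finset.sum_congr rfl (fun m _ => hF m)]
  have hq0 : c p q ((q : ℕ) : ℤ) * e q (n * ((q : ℕ) : ℤ))
      = c p q ((0 : ℕ) : ℤ) * e q (n * ((0 : ℕ) : ℤ)) := by
    have hc : c p q ((q : ℕ) : ℤ) = c p q 0 := by
      rw [show ((q : ℕ) : ℤ) = 0 + (q : ℤ) by ring, c_add_q hq]
    have he : e q (n * ((q : ℕ) : ℤ)) = 1 := by
      rw [show n * ((q : ℕ) : ℤ) = (q : ℤ) * n by ring]; exact e_q_mul hq n
    have he0 : e q (n * ((0 : ℕ) : ℤ)) = 1 := by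
      rw [e]; norm_num
    rw [hc, he, he0]
    norm_num
  have h1 := Finset.sum_range_succ' (fun m : ℕ => c p q m * e q (n * m)) q
  have h2 := Finset.sum_range_succ (fun m : ℕ => c p q m * e q (n * m)) q
  rw [h2] at h1
  have := h1.symm
  linear_combination hq0 - h1

end CFU

/-- The circulant factor `Γ = (γ_{n−m})` of the resonant Floquet matrices of
the `(p,q)`-resonant quantum piecewise linear Fermi–Ulam accelerator is
unitary: `Γ·Γ* = 1`. -/
theorem circulant_floquet_factor_unitary
    (p q : ℕ) (hp : 0 < p) (hq : 0 < q) (hpq : Nat.Coprime p q)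
    (γ : ℤ → ℂ)
    (hγ : ∀ n : ℤ, γ n = (1 / (q : ℂ)) * ∑ m ∈ Finset.range q,
      Complex.exp (-2 * (Real.pi : ℂ) * Complex.I * (m : ℂ)^2 * (p : ℂ) / (q : ℂ))
        * ((Real.cos (2 * Real.pi * (n : ℝ) * (m : ℝ) / (q : ℝ)) : ℝ) : ℂ))
    (Γ : Matrix (Fin q) (Fin q) ℂ)
    (hΓ : ∀ i j : Fin q, Γ i j = γ ((j : ℤ) - (i : ℤ))) :
    Γ * Γ.conjTranspose = 1 := by
  classical
  have hq' : (q : ℂ) ≠ 0 := Nat.cast_ne_zero.mpr hq.ne'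
  -- Symmetrized exponential form of γ
  have hγ' : ∀ n : ℤ, γ n
      = (1 / (q : ℂ)) * ∑ m ∈ Finset.range q, CFU.c p q m * CFU.e q (n * m) := by
    intro n
    rw [hγ n]
    have hterm : ∀ m ∈ Finset.range q,
        Complex.exp (-2 * (Real.pi : ℂ) * Complex.I * (m : ℂ)^2 * (p : ℂ) / (q : ℂ))
          * ((Real.cos (2 * Real.pi * (n : ℝ) * (m : ℝ) / (q : ℝ)) : ℝ) : ℂ)
        = (CFU.c p q m * CFU.e q (n * m) + CFU.c p q m * CFU.e q (-(n * m))) / 2 := by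
      intro m hm
      have hc : CFU.c p q ((m : ℕ) : ℤ)
          = Complex.exp (-2 * (Real.pi : ℂ) * Complex.I * (m : ℂ)^2 * (p : ℂ) / (q : ℂ)) := by
        rw [CFU.c]; norm_cast
      have hcos : ((Real.cos (2 * Real.pi * (n : ℝ) * (m : ℝ) / (q : ℝ)) : ℝ) : ℂ)
          = (CFU.e q (n * m) + CFU.e q (-(n * m))) / 2 := by
        rw [Complex.ofReal_cos, Complex.cos]
        congr 2
        · rw [CFU.e]; congr 1; push_cast; ring
        · rw [CFU.e]; congr 1; push_cast; ring
      rw [hcos, ← hc]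
      ring
    rw [Finset.sum_congr rfl hterm]
    have hsplit : ∑ m ∈ Finset.range q,
        (CFU.c p q m * CFU.e q (n * m) + CFU.c p q m * CFU.e q (-(n * m))) / 2
        = ((∑ m ∈ Finset.range q, CFU.c p q m * CFU.e q (n * m))
          + ∑ m ∈ Finset.range q, CFU.c p q m * CFU.e q (-(n * m))) / 2 := by
      rw [← Finset.sum_add_distrib, ← Finset.sum_div]
    rw [hsplit, CFU.sum_sym hq p n]
    ring
  have hγc : ∀ n : ℤ, (starRingEnd ℂ) (γ n)
      = (1 / (q : ℂ)) * ∑ m ∈ Finset.range q,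
          (starRingEnd ℂ) (CFU.c p q m) * CFU.e q (-(n * m)) := by
    intro n
    rw [hγ' n, map_mul, map_sum]
    congr 1
    · simp
    · exact Finset.sum_congr rfl fun m _ => by rw [map_mul, CFU.e_conj]
  ext i j
  rw [Matrix.mul_apply]
  simp only [Matrix.conjTranspose_apply, hΓ, Matrix.one_apply, ← starRingEnd_apply]
  have hmain : ∀ k : Fin q,
      γ ((k : ℤ) - (i : ℤ)) * (starRingEnd ℂ) (γ ((k : ℤ) - (j : ℤ)))
      = (1 / (q : ℂ))^2 * ∑ m ∈ Finset.range q, ∑ m' ∈ Finset.range q,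
          (CFU.c p q m * (starRingEnd ℂ) (CFU.c p q m')
            * CFU.e q ((j : ℤ) * m' - (i : ℤ) * m))
            * CFU.e q (((m : ℤ) - (m' : ℤ)) * (k : ℤ)) := by
    intro k
    rw [hγ', hγc, mul_mul_mul_comm, Finset.sum_mul_sum]
    rw [show (1 / (q : ℂ)) * (1 / (q : ℂ)) = (1 / (q : ℂ))^2 by ring]
    congr 1
    refine Finset.sum_congr rfl fun m _ => Finset.sum_congr rfl fun m' _ => ?_
    have he : CFU.e q (((k : ℤ) - i) * m) * CFU.e q (-(((k : ℤ) - j) * m'))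
        = CFU.e q ((j : ℤ) * m' - (i : ℤ) * m) * CFU.e q (((m : ℤ) - (m' : ℤ)) * k) := by
      rw [← CFU.e_add, ← CFU.e_add]
      congr 1
      ring
    calc CFU.c p q m * CFU.e q (((k : ℤ) - i) * m)
          * ((starRingEnd ℂ) (CFU.c p q m') * CFU.e q (-(((k : ℤ) - j) * m')))
        = CFU.c p q m * (starRingEnd ℂ) (CFU.c p q m')
            * (CFU.e q (((k : ℤ) - i) * m) * CFU.e q (-(((k : ℤ) - j) * m'))) := by ring
      _ = _ := by rw [he]; ring
  rw [Finset.sum_congr rfl fun k _ => hmain k, ← Finset.mul_sum]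
  have hswap : ∑ k : Fin q, ∑ m ∈ Finset.range q, ∑ m' ∈ Finset.range q,
        (CFU.c p q m * (starRingEnd ℂ) (CFU.c p q m')
          * CFU.e q ((j : ℤ) * m' - (i : ℤ) * m))
          * CFU.e q (((m : ℤ) - (m' : ℤ)) * (k : ℤ))
      = ∑ m ∈ Finset.range q, ∑ m' ∈ Finset.range q,
        (CFU.c p q m * (starRingEnd ℂ) (CFU.c p q m')
          * CFU.e q ((j : ℤ) * m' - (i : ℤ) * m))
          * ∑ k ∈ Finset.range q, CFU.e q (((m : ℤ) - (m' : ℤ)) * k) := by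
    rw [Finset.sum_comm]
    refine Finset.sum_congr rfl fun m _ => ?_
    rw [Finset.sum_comm]
    refine Finset.sum_congr rfl fun m' _ => ?_
    rw [Finset.mul_sum]
    exact (Fin.sum_univ_eq_sum_range
      (fun k : ℕ => (CFU.c p q m * (starRingEnd ℂ) (CFU.c p q m')
        * CFU.e q ((j : ℤ) * m' - (i : ℤ) * m))
        * CFU.e q (((m : ℤ) - (m' : ℤ)) * k)) q).symm ▸ rfl
  rw [hswap]
  have hcollapse : ∀ m ∈ Finset.range q, ∑ m' ∈ Finset.range q,
        (CFU.c p q m * (starRingEnd ℂ) (CFU.c p q m')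
          * CFU.e q ((j : ℤ) * m' - (i : ℤ) * m))
          * ∑ k ∈ Finset.range q, CFU.e q (((m : ℤ) - (m' : ℤ)) * k)
      = CFU.e q (((j : ℤ) - (i : ℤ)) * m) * (q : ℂ) := by
    intro m hm
    have hm' : m < q := Finset.mem_range.mp hm
    have hstep : ∀ m' ∈ Finset.range q,
        (CFU.c p q m * (starRingEnd ℂ) (CFU.c p q m')
          * CFU.e q ((j : ℤ) * m' - (i : ℤ) * m))
          * ∑ k ∈ Finset.range q, CFU.e q (((m : ℤ) - (m' : ℤ)) * k)
        = if m' = m then (CFU.c p q m * (starRingEnd ℂ) (CFU.c p q m')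
            * CFU.e q ((j : ℤ) * m' - (i : ℤ) * m)) * (q : ℂ) else 0 := by
      intro m' hm'2
      have hm'' : m' < q := Finset.mem_range.mp hm'2
      rw [CFU.e_geom hq]
      have hiff : ((q : ℤ) ∣ ((m : ℤ) - (m' : ℤ))) ↔ m' = m := by
        constructor
        · intro hd
          have h0 : (m : ℤ) - (m' : ℤ) = 0 :=
            Int.eq_zero_of_abs_lt_dvd hd (by rw [abs_sub_lt_iff]; omega)
          omega
        · rintro rfl; simp
      by_cases h : m' = m
      · rw [if_pos ((hiff).mpr h), if_pos h]
      · rw [if_neg fun hd => h (hiff.mp hd), if_neg h, mul_zero]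
    rw [Finset.sum_congr rfl hstep, Finset.sum_ite_eq' (Finset.range q) m, if_pos hm,
      CFU.c_mul_conj, one_mul]
    congr 2
    ring
  rw [Finset.sum_congr rfl hcollapse]
  have hfin : ∑ m ∈ Finset.range q, CFU.e q (((j : ℤ) - (i : ℤ)) * m) * (q : ℂ)
      = (if (q : ℤ) ∣ ((j : ℤ) - (i : ℤ)) then (q : ℂ) else 0) * (q : ℂ) := by
    rw [← Finset.sum_mul, CFU.e_geom hq]
  rw [hfin]
  by_cases hij : i = j
  · subst hij
    rw [if_pos (by simp), if_pos rfl]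
    have : ((q:ℂ)) * (q:ℂ) ≠ 0 := mul_ne_zero hq' hq'
    field_simp
  · have hi : (i : ℕ) < q := i.isLt
    have hj : (j : ℕ) < q := j.isLt
    have hnd : ¬ ((q : ℤ) ∣ ((j : ℤ) - (i : ℤ))) := by
      intro hd
      have h0 : (j : ℤ) - (i : ℤ) = 0 :=
        Int.eq_zero_of_abs_lt_dvd hd (by rw [abs_sub_lt_iff]; omega)
      exact hij (Fin.ext (by omega))
    rw [if_neg hnd, if_neg hij]
    ring
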